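/- (Lemma 2.5(1),(2)) In the generalized matrix ring setting, let φ : R → R be an additive map satisfying condition (P), and define ψ(U) = φ(U) − φ(1)·U + T·U − U·T where T = e·φ(e)·f + f·φ(f)·e and f = 1 − e. Then ψ maps the corner eRe into eRe and the corner fRf into fRf: for every a ∈ R with a = eae one has ψ(a) = e·ψ(a)·e, and for every b ∈ R with b = fbf one has ψ(b) = f·ψ(b)·f. -/
import Mathlib


lemma aux_corner {R : Type*} [Ring R] (φ : R →+ R) (e f T : R)
    (he : e * e = e) (hff : f * f = f) (hef : e * f = 0) (hfe : f * e = 0)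
    (h1 : e + f = 1)
    (h2 : ∀ x : R, f * x * f + f * x * f = 0 → f * x * f = 0)
    (hP : ∀ U V : R, U * V = 0 → V * U = 0 →
      φ U * V + V * φ U + U * φ V + φ V * U = 0)
    (hT : T = e * φ e * f + f * φ f * e)
    (ψ : R → R)
    (hψ : ∀ U : R, ψ U = φ U - φ 1 * U + (T * U - U * T))
    (a : R) (ha : a = e * a * e) : ψ a = e * ψ a * e := by
  have hea : e * a = a := by
    nth_rewrite 1 [ha]; rw [← mul_assoc, ← mul_assoc, he, ← ha]
  have hae : a * e = a := by
    nth_rewrite 1 [ha]; rw [mul_assoc, he, ← ha]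
  have haf : a * f = 0 := by rw [← hae, mul_assoc, hef, mul_zero]
  have hfa : f * a = 0 := by rw [← hea, ← mul_assoc, hfe, zero_mul]
  have hφ1 : φ 1 = φ e + φ f := by rw [← map_add, h1]
  have Hee : ∀ x : R, e * (e * x) = e * x := fun x => by rw [← mul_assoc, he]
  have Hff : ∀ x : R, f * (f * x) = f * x := fun x => by rw [← mul_assoc, hff]
  have Hef : ∀ x : R, e * (f * x) = 0 := fun x => by rw [← mul_assoc, hef, zero_mul]
  have Hfe : ∀ x : R, f * (e * x) = 0 := fun x => by rw [← mul_assoc, hfe, zero_mul]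
  have Hea : ∀ x : R, e * (a * x) = a * x := fun x => by rw [← mul_assoc, hea]
  have Hae : ∀ x : R, a * (e * x) = a * x := fun x => by rw [← mul_assoc, hae]
  have Haf : ∀ x : R, a * (f * x) = 0 := fun x => by rw [← mul_assoc, haf, zero_mul]
  have Hfa : ∀ x : R, f * (a * x) = 0 := fun x => by rw [← mul_assoc, hfa, zero_mul]
  have hPef := hP e f hef hfe
  have hPaf := hP a f haf hfa
  -- e φ(1) f = 0
  have h4 : e * (φ 1 * f) = 0 := by
    have h := congrArg (fun z => e * z * f) hPef
    simp only [add_mul, mul_add, mul_assoc, mul_zero, zero_mul, he, hff, hef, hfe,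
      Hee, Hff, Hef, Hfe, add_zero, zero_add] at h
    rw [hφ1]
    simp only [add_mul, mul_add]
    exact h
  have h4a : a * (φ 1 * f) = 0 := by rw [← hae, mul_assoc, h4, mul_zero]
  have h4' : f * (φ 1 * e) = 0 := by
    have h := congrArg (fun z => f * z * e) hPef
    simp only [add_mul, mul_add, mul_assoc, mul_zero, zero_mul, he, hff, hef, hfe,
      Hee, Hff, Hef, Hfe, add_zero, zero_add] at h
    rw [hφ1]
    simp only [add_mul, mul_add]
    exact h
  have h4b : f * (φ 1 * a) = 0 := by
    rw [← hea, ← mul_assoc (φ 1) e a, ← mul_assoc f, h4', zero_mul]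
  -- f φ(a) f = 0
  have h5 : f * (φ a * f) = 0 := by
    have h := congrArg (fun z => f * z * f) hPaf
    simp only [add_mul, mul_add, mul_assoc, mul_zero, zero_mul, he, hff, hef, hfe,
      haf, hfa, hea, hae, Hee, Hff, Hef, Hfe, Hea, Hae, Haf, Hfa,
      add_zero, zero_add] at h
    rw [← mul_assoc]
    exact h2 (φ a) (by rw [mul_assoc]; exact h)
  -- e φ(a) f + a φ(f) f = 0
  have h6 : e * (φ a * f) + a * (φ f * f) = 0 := by
    have h := congrArg (fun z => e * z * f) hPaf
    simp only [add_mul, mul_add, mul_assoc, mul_zero, zero_mul, he, hff, hef, hfe,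
      haf, hfa, hea, hae, Hee, Hff, Hef, Hfe, Hea, Hae, Haf, Hfa,
      add_zero, zero_add] at h
    exact h
  -- f φ(a) e + f (φ f * a) = 0
  have h7 : f * (φ a * e) + f * (φ f * a) = 0 := by
    have h := congrArg (fun z => f * z * e) hPaf
    simp only [add_mul, mul_add, mul_assoc, mul_zero, zero_mul, he, hff, hef, hfe,
      haf, hfa, hea, hae, Hee, Hff, Hef, Hfe, Hea, Hae, Haf, Hfa,
      add_zero, zero_add] at h
    exact h
  have hφf : φ f = φ 1 - φ e := by rw [hφ1]; abel
  -- the three off-corner components vanish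
  have z2 : e * ψ a * f = 0 := by
    rw [hψ a, hT]
    simp only [sub_mul, mul_sub, add_mul, mul_add, mul_assoc, mul_zero, zero_mul,
      he, hff, hef, hfe, haf, hfa, hea, hae,
      Hee, Hff, Hef, Hfe, Hea, Hae, Haf, Hfa, add_zero, zero_add, sub_zero, zero_sub]
    have key : a * (φ f * f) = -(a * (φ e * f)) := by
      rw [hφf, sub_mul, mul_sub, h4a, zero_sub]
    simp only [neg_mul, mul_assoc, hff]
    rw [← key]
    exact h6
  have z3 : f * ψ a * e = 0 := by
    rw [hψ a, hT]
    simp only [sub_mul, mul_sub, add_mul, mul_add, mul_assoc, mul_zero, zero_mul,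
      he, hff, hef, hfe, haf, hfa, hea, hae,
      Hee, Hff, Hef, Hfe, Hea, Hae, Haf, Hfa, add_zero, zero_add, sub_zero, zero_sub]
    rw [h4b, sub_zero]
    exact h7
  have z4 : f * ψ a * f = 0 := by
    rw [hψ a, hT]
    simp only [sub_mul, mul_sub, add_mul, mul_add, mul_assoc, mul_zero, zero_mul,
      he, hff, hef, hfe, haf, hfa, hea, hae,
      Hee, Hff, Hef, Hfe, Hea, Hae, Haf, Hfa, add_zero, zero_add, sub_zero, zero_sub]
    exact h5
  have hdec : ψ a = (e + f) * ψ a * (e + f) := by rw [h1, one_mul, mul_one]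
  nth_rewrite 1 [hdec]
  rw [add_mul, add_mul, mul_add, mul_add, z2, z3, z4, add_zero, zero_add, add_zero]


theorem psi_preserves_diagonal_corners
    {R : Type*} [Ring R] (e : R) (he : e * e = e)
    (h2A : ∀ x : R, e * x * e + e * x * e = 0 → e * x * e = 0)
    (h2B : ∀ x : R, (1 - e) * x * (1 - e) + (1 - e) * x * (1 - e) = 0 →
      (1 - e) * x * (1 - e) = 0)
    (hlf : ∀ a : R, a = e * a * e → (∀ x : R, a * (e * x * (1 - e)) = 0) → a = 0)
    (hrf : ∀ b : R, b = (1 - e) * b * (1 - e) → (∀ x : R, (e * x * (1 - e)) * b = 0) → b = 0)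
    (φ : R →+ R)
    (hP : ∀ U V : R, U * V = 0 → V * U = 0 →
      φ U * V + V * φ U + U * φ V + φ V * U = 0)
    (ψ : R → R)
    (hψ : ∀ U : R, ψ U = φ U - φ 1 * U +
      ((e * φ e * (1 - e) + (1 - e) * φ (1 - e) * e) * U -
        U * (e * φ e * (1 - e) + (1 - e) * φ (1 - e) * e))) :
    (∀ a : R, a = e * a * e → ψ a = e * ψ a * e) ∧
    (∀ b : R, b = (1 - e) * b * (1 - e) → ψ b = (1 - e) * ψ b * (1 - e)) := by
  have hef : e * (1 - e) = 0 := by rw [mul_sub, mul_one, he, sub_self]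
  have hfe : (1 - e) * e = 0 := by rw [sub_mul, one_mul, he, sub_self]
  have hff : (1 - e) * (1 - e) = 1 - e := by
    rw [sub_mul, one_mul, mul_sub, mul_one, he, sub_self, sub_zero]
  have h1 : e + (1 - e) = 1 := by abel
  have h1' : (1 - e) + e = 1 := by abel
  set T := e * φ e * (1 - e) + (1 - e) * φ (1 - e) * e with hTdef
  constructor
  · intro a ha
    exact aux_corner φ e (1 - e) T he hff hef hfe h1 h2B hP hTdef ψ hψ a ha
  · intro b hb
    exact aux_corner φ (1 - e) e T hff he hfe hef h1' h2A hP
      (by rw [hTdef, add_comm]) ψ hψ b hb
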